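/- In the setting of restrictions to the kernel of an odd-prime-degree isogeny ψ of E: let φ, ρ: E → E' be isogenies, neither vanishing on any nonzero point of ker(ψ), with interpolating polynomials (a, b) and (c, d) respectively of degree less than deg h. If a(x_P) = c(x_P) at a single nonzero point P ∈ ker(ψ), then a = c identically and b = ±d. Moreover, if a ≠ c in F_q[x]/(h(x)), then a − c is invertible in F_q[x]/(h(x)). -/

import Mathlib

open Polynomial

/-- Restrictions to the kernel of an odd-prime-degree isogeny `ψ` of `E`.
The kernel is modeled as an abelian group `A` of order `ℓ` (odd prime) with coordinate
map `ι : A → Ω × Ω` on nonzero points, the target curve's points as `B` with coordinate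
map `ιB`; `φ ρ : A →+ B` are the restrictions of two isogenies, vanishing nowhere on
`A \ {0}`, with interpolating polynomials `(a, b)` and `(c, d)` of degree `< deg h`.
CONTEXT hypotheses: `x(φ P) = x(ρ P) → φ P = ±ρ P` (`hBx`), negation acts by `y ↦ −y`
(`hBneg`), nonzero points are determined by their coordinates (`hBinj`), kernel points
have `h(x_P) = 0` and `y_P ≠ 0`, every root of the separable, split polynomial `h`
arises from a kernel point.
Conclusions: if `a(x_P) = c(x_P)` at a single nonzero `P`, then `a = c` and `b = ±d`;
moreover if `h ∤ a − c` (i.e. `a ≠ c` in `𝔽_q[x]/(h)`), then `a − c` is invertible in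
`𝔽_q[x]/(h)`. -/
theorem interpolation_by_single_point
    (F : Type*) [Field F] (Ω : Type*) [Field Ω] [Algebra F Ω]
    (ℓ : ℕ) (hℓ : ℓ.Prime) (hodd : Odd ℓ)
    (h : Polynomial F) (hne : 0 < h.natDegree)
    (hsep : Squarefree (h.map (algebraMap F Ω)))
    (hsplit : (h.map (algebraMap F Ω)).roots.card = h.natDegree)
    (A : Type*) [AddCommGroup A] (hA : Nat.card A = ℓ)
    (ι : A → Ω × Ω)
    (hx : ∀ P : A, P ≠ 0 → Polynomial.aeval (ι P).1 h = 0)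
    (hy : ∀ P : A, P ≠ 0 → (ι P).2 ≠ 0)
    (hcover : ∀ z : Ω, Polynomial.aeval z h = 0 → ∃ P : A, P ≠ 0 ∧ (ι P).1 = z)
    (B : Type*) [AddCommGroup B] (ιB : B → Ω × Ω)
    (hBneg : ∀ Q : B, ιB (-Q) = ((ιB Q).1, -(ιB Q).2))
    (hBinj : ∀ Q R : B, Q ≠ 0 → R ≠ 0 → ιB Q = ιB R → Q = R)
    (hBx : ∀ Q R : B, Q ≠ 0 → R ≠ 0 → (ιB Q).1 = (ιB R).1 → Q = R ∨ Q = -R)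
    (φ ρ : A →+ B)
    (hφ0 : ∀ P : A, P ≠ 0 → φ P ≠ 0) (hρ0 : ∀ P : A, P ≠ 0 → ρ P ≠ 0)
    (a b c d : Polynomial F)
    (ha : a.degree < h.degree) (hb : b.degree < h.degree)
    (hc : c.degree < h.degree) (hd : d.degree < h.degree)
    (hφint : ∀ P : A, P ≠ 0 →
      ιB (φ P) = (Polynomial.aeval (ι P).1 a, Polynomial.aeval (ι P).1 b * (ι P).2))
    (hρint : ∀ P : A, P ≠ 0 →
      ιB (ρ P) = (Polynomial.aeval (ι P).1 c, Polynomial.aeval (ι P).1 d * (ι P).2)) :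
    ((∃ P : A, P ≠ 0 ∧ Polynomial.aeval (ι P).1 a = Polynomial.aeval (ι P).1 c) →
      a = c ∧ (b = d ∨ b = -d)) ∧
    (¬ h ∣ (a - c) →
      IsUnit (Ideal.Quotient.mk (Ideal.span ({h} : Set (Polynomial F))) (a - c))) := by
  classical
  set f := algebraMap F Ω with hf
  haveI : Fact ℓ.Prime := ⟨hℓ⟩
  have hh0 : h ≠ 0 := fun hz => by simp [hz] at hne
  have hmne : h.map f ≠ 0 := by
    rwa [Ne, Polynomial.map_eq_zero]
  have haev : ∀ (p : Polynomial F) (z : Ω), Polynomial.aeval z p = (p.map f).eval z := by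
    intro p z; rw [Polynomial.aeval_def, Polynomial.eval_map]
  have hnodup : (h.map f).roots.Nodup := by
    rw [Multiset.nodup_iff_count_le_one]
    intro z
    rw [Polynomial.count_roots]
    by_contra hlt
    push_neg at hlt
    have hdvd : (X - C z) * (X - C z) ∣ h.map f := by
      have := (pow_dvd_pow (X - C z) hlt).trans
        (Polynomial.pow_rootMultiplicity_dvd (h.map f) z)
      rwa [sq] at this
    exact Polynomial.not_isUnit_X_sub_C z (hsep _ hdvd)
  -- key vanishing lemma
  have key : ∀ p : Polynomial F, p.degree < h.degree →
      (∀ P : A, P ≠ 0 → Polynomial.aeval (ι P).1 p = 0) → p = 0 := by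
    intro p hdeg hz
    by_contra hp
    have hpm : p.map f ≠ 0 := by rwa [Ne, Polynomial.map_eq_zero]
    have hsub : (h.map f).roots.toFinset ⊆ (p.map f).roots.toFinset := by
      intro z hzmem
      rw [Multiset.mem_toFinset, Polynomial.mem_roots hmne] at hzmem
      have hzh : Polynomial.aeval z h = 0 := by
        rw [haev]; exact hzmem
      obtain ⟨P, hP, hPz⟩ := hcover z hzh
      rw [Multiset.mem_toFinset, Polynomial.mem_roots hpm]
      have := hz P hP
      rw [hPz, haev] at this
      exact this
    have hcard1 : (h.map f).roots.toFinset.card = h.natDegree := by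
      rw [Multiset.toFinset_card_of_nodup hnodup, hsplit]
    have h1 : h.natDegree ≤ (p.map f).roots.toFinset.card :=
      hcard1 ▸ Finset.card_le_card hsub
    have h2 : (p.map f).roots.toFinset.card ≤ Multiset.card (p.map f).roots :=
      Multiset.toFinset_card_le _
    have h3 : Multiset.card (p.map f).roots ≤ (p.map f).natDegree :=
      Polynomial.card_roots' _
    have h4 : (p.map f).natDegree = p.natDegree :=
      Polynomial.natDegree_map_eq_of_injective (algebraMap F Ω).injective p
    have h5 : p.natDegree < h.natDegree := Polynomial.natDegree_lt_natDegree hp hdeg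
    omega
  -- Part 1
  have part1 : (∃ P : A, P ≠ 0 ∧ Polynomial.aeval (ι P).1 a = Polynomial.aeval (ι P).1 c) →
      a = c ∧ (b = d ∨ b = -d) := by
    rintro ⟨P, hP, hac⟩
    have hgen : ∀ Q : A, Q ≠ 0 → ∃ n : ℤ, n • P = Q := fun Q _ =>
      AddSubgroup.mem_zmultiples_iff.mp (mem_zmultiples_of_prime_card hA hP)
    have hxeq : (ιB (φ P)).1 = (ιB (ρ P)).1 := by
      rw [hφint P hP, hρint P hP]; exact hac
    rcases hBx _ _ (hφ0 P hP) (hρ0 P hP) hxeq with hpm | hpm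
    · -- φ P = ρ P
      have hall : ∀ Q : A, Q ≠ 0 → φ Q = ρ Q := by
        intro Q hQ
        obtain ⟨n, rfl⟩ := hgen Q hQ
        rw [map_zsmul, map_zsmul, hpm]
      have hac' : a = c := by
        rw [← sub_eq_zero]
        apply key _ (lt_of_le_of_lt (Polynomial.degree_sub_le a c) (max_lt ha hc))
        intro Q hQ
        have := congrArg Prod.fst ((hφint Q hQ).symm.trans ((congrArg ιB (hall Q hQ)).trans (hρint Q hQ)))
        simp only [map_sub] at *
        rw [sub_eq_zero]
        exact this
      refine ⟨hac', Or.inl ?_⟩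
      rw [← sub_eq_zero]
      apply key _ (lt_of_le_of_lt (Polynomial.degree_sub_le b d) (max_lt hb hd))
      intro Q hQ
      have := congrArg Prod.snd ((hφint Q hQ).symm.trans ((congrArg ιB (hall Q hQ)).trans (hρint Q hQ)))
      simp only at this
      have hy' := hy Q hQ
      have : Polynomial.aeval (ι Q).1 b = Polynomial.aeval (ι Q).1 d :=
        mul_right_cancel₀ hy' this
      rw [map_sub, this, sub_self]
    · -- φ P = -ρ P
      have hall : ∀ Q : A, Q ≠ 0 → φ Q = -(ρ Q) := by
        intro Q hQ
        obtain ⟨n, rfl⟩ := hgen Q hQ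
        rw [map_zsmul, map_zsmul, hpm, smul_neg]
      have hιeq : ∀ Q : A, Q ≠ 0 → ιB (φ Q) = ((ιB (ρ Q)).1, -(ιB (ρ Q)).2) := by
        intro Q hQ
        rw [hall Q hQ, hBneg]
      have hac' : a = c := by
        rw [← sub_eq_zero]
        apply key _ (lt_of_le_of_lt (Polynomial.degree_sub_le a c) (max_lt ha hc))
        intro Q hQ
        have := congrArg Prod.fst ((hφint Q hQ).symm.trans (hιeq Q hQ))
        rw [hρint Q hQ] at this
        simp only at this
        rw [map_sub, this, sub_self]
      refine ⟨hac', Or.inr ?_⟩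
      rw [← sub_eq_zero]
      have hdeg : (b - -d).degree < h.degree := by
        refine lt_of_le_of_lt (Polynomial.degree_sub_le b (-d)) (max_lt hb ?_)
        rwa [Polynomial.degree_neg]
      apply key _ hdeg
      intro Q hQ
      have := congrArg Prod.snd ((hφint Q hQ).symm.trans (hιeq Q hQ))
      rw [hρint Q hQ] at this
      simp only at this
      have hy' := hy Q hQ
      have hbd : Polynomial.aeval (ι Q).1 b = -Polynomial.aeval (ι Q).1 d := by
        apply mul_right_cancel₀ hy'
        rw [this, neg_mul]
      rw [map_sub, map_neg, hbd, sub_self]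
  refine ⟨part1, ?_⟩
  -- Part 2
  intro hnd
  have hcop : IsCoprime (a - c) h := by
    by_contra hncop
    set g := EuclideanDomain.gcd (a - c) h with hg
    have hgu : ¬ IsUnit g := fun hu => hncop ((EuclideanDomain.gcd_isUnit_iff).mp hu)
    have hgdh : g ∣ h := EuclideanDomain.gcd_dvd_right _ _
    have hgdac : g ∣ a - c := EuclideanDomain.gcd_dvd_left _ _
    have hg0 : g ≠ 0 := by
      intro h0
      rw [h0] at hgdh
      exact hh0 (zero_dvd_iff.mp hgdh)
    have hgdeg : g.degree ≠ 0 := fun hd0 =>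
      hgu (Polynomial.isUnit_iff_degree_eq_zero.mpr hd0)
    have hsplits : Splits (h.map f) := by
      rw [Polynomial.splits_iff_card_roots, hsplit,
        Polynomial.natDegree_map_eq_of_injective (algebraMap F Ω).injective]
    have hgsplits : Splits (g.map f) := hsplits.of_dvd hmne (Polynomial.map_dvd f hgdh)
    obtain ⟨z, hz⟩ := hgsplits.exists_eval_eq_zero (by rwa [Polynomial.degree_map])
    have hzg : Polynomial.aeval z g = 0 := by rw [haev]; exact hz
    have hzh : Polynomial.aeval z h = 0 := by
      obtain ⟨q, hq⟩ := hgdh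
      rw [hq, map_mul, hzg, zero_mul]
    have hzac : Polynomial.aeval z (a - c) = 0 := by
      obtain ⟨q, hq⟩ := hgdac
      rw [hq, map_mul, hzg, zero_mul]
    obtain ⟨P, hP, hPz⟩ := hcover z hzh
    have hac : Polynomial.aeval (ι P).1 a = Polynomial.aeval (ι P).1 c := by
      rw [hPz]
      rw [map_sub, sub_eq_zero] at hzac
      exact hzac
    have := (part1 ⟨P, hP, hac⟩).1
    exact hnd (by rw [this, sub_self]; exact dvd_zero h)
  obtain ⟨u, v, huv⟩ := hcop
  have hmkh : Ideal.Quotient.mk (Ideal.span ({h} : Set (Polynomial F))) h = 0 :=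
    Ideal.Quotient.eq_zero_iff_mem.mpr (Ideal.mem_span_singleton_self h)
  apply IsUnit.of_mul_eq_one (Ideal.Quotient.mk _ u)
  have := congrArg (Ideal.Quotient.mk (Ideal.span ({h} : Set (Polynomial F)))) huv
  simpa [map_add, map_mul, hmkh, mul_comm] using this
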